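/- Let y : [0,Δu] → ℝ be a piecewise C¹ curve with y(0) = 1 and y(Δu) = √(1+Δu), and let p(u) = 1/(4(1+u)²). Then ∫₀^{Δu} (ẏ(u)² − p(u)·y(u)²) du ≥ 0, with equality for y(u) = √(1+u). Hence the infimum of the functional over all such curves equals 0. -/

import Mathlib

open MeasureTheory Real

private lemma swap_aux {T : ℝ} {f g : ℝ → ℝ}
    (hf : IntegrableOn f (Set.Ioc 0 T))
    (hg : IntegrableOn g (Set.Ioc 0 T)) :
    ∫ u in Set.Ioc (0:ℝ) T, f u * (∫ s in Set.Ioc (0:ℝ) T ∩ Set.Iic u, g s)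
      = ∫ s in Set.Ioc (0:ℝ) T, g s * (∫ u in Set.Ioc (0:ℝ) T ∩ Set.Ici s, f u) := by
  have hS : MeasurableSet {p : ℝ × ℝ | p.2 ≤ p.1} :=
    (isClosed_le continuous_snd continuous_fst).measurableSet
  set F : ℝ × ℝ → ℝ := {p : ℝ × ℝ | p.2 ≤ p.1}.indicator (fun p => f p.1 * g p.2) with hF
  have hint : Integrable F
      ((volume.restrict (Set.Ioc (0:ℝ) T)).prod (volume.restrict (Set.Ioc (0:ℝ) T))) :=
    (Integrable.mul_prod hf hg).indicator hS
  have swap := MeasureTheory.integral_integral_swap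
    (f := fun u s => F (u, s))
    (μ := volume.restrict (Set.Ioc (0:ℝ) T)) (ν := volume.restrict (Set.Ioc (0:ℝ) T)) hint
  have inner1 : ∀ u : ℝ, (∫ s in Set.Ioc (0:ℝ) T, F (u, s))
      = f u * ∫ s in Set.Ioc (0:ℝ) T ∩ Set.Iic u, g s := by
    intro u
    have h1 : (fun s => F (u, s)) = (Set.Iic u).indicator (fun s => f u * g s) := by
      funext s
      by_cases h : s ≤ u <;> simp [hF, Set.indicator_apply, h]
    rw [h1, setIntegral_indicator measurableSet_Iic, integral_const_mul]
  have inner2 : ∀ s : ℝ, (∫ u in Set.Ioc (0:ℝ) T, F (u, s))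
      = g s * ∫ u in Set.Ioc (0:ℝ) T ∩ Set.Ici s, f u := by
    intro s
    have h1 : (fun u => F (u, s)) = (Set.Ici s).indicator (fun u => f u * g s) := by
      funext u
      by_cases h : s ≤ u <;> simp [hF, Set.indicator_apply, h]
    rw [h1, setIntegral_indicator measurableSet_Ici, integral_mul_const, mul_comm]
  calc ∫ u in Set.Ioc (0:ℝ) T, f u * (∫ s in Set.Ioc (0:ℝ) T ∩ Set.Iic u, g s)
      = ∫ u in Set.Ioc (0:ℝ) T, ∫ s in Set.Ioc (0:ℝ) T, F (u, s) := by
        refine integral_congr_ae (Filter.Eventually.of_forall fun u => ?_)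
        simpa using (inner1 u).symm
    _ = ∫ s in Set.Ioc (0:ℝ) T, ∫ u in Set.Ioc (0:ℝ) T, F (u, s) := swap
    _ = ∫ s in Set.Ioc (0:ℝ) T, g s * (∫ u in Set.Ioc (0:ℝ) T ∩ Set.Ici s, f u) := by
        refine integral_congr_ae (Filter.Eventually.of_forall fun s => ?_)
        simpa using inner2 s
private lemma lemC {T : ℝ} (hT : 0 ≤ T) {φ : ℝ → ℝ}
    (hφ : IntervalIntegrable φ volume 0 T) :
    (∫ u in (0:ℝ)..T, φ u * (∫ s in (0:ℝ)..u, φ s))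
      = (∫ s in (0:ℝ)..T, φ s) ^ 2 / 2 := by
  have hφ' : IntegrableOn φ (Set.Ioc 0 T) :=
    (intervalIntegrable_iff_integrableOn_Ioc_of_le hT).mp hφ
  have hYc : ContinuousOn (fun u => ∫ s in (0:ℝ)..u, φ s) (Set.uIcc (0:ℝ) T) :=
    intervalIntegral.continuousOn_primitive_interval' hφ Set.left_mem_uIcc
  have key : ∀ u ∈ Set.Ioc (0:ℝ) T,
      (∫ s in Set.Ioc (0:ℝ) T ∩ Set.Iic u, φ s) = ∫ s in (0:ℝ)..u, φ s := by
    intro u hu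
    rw [Set.Ioc_inter_Iic, inf_eq_right.mpr hu.2, intervalIntegral.integral_of_le hu.1.le]
  have key2 : ∀ s ∈ Set.Ioc (0:ℝ) T,
      (∫ u in Set.Ioc (0:ℝ) T ∩ Set.Ici s, φ u)
        = (∫ u in (0:ℝ)..T, φ u) - ∫ u in (0:ℝ)..s, φ u := by
    intro s hs
    have hset : Set.Ioc (0:ℝ) T ∩ Set.Ici s = Set.Icc s T := by
      ext x
      simp only [Set.mem_inter_iff, Set.mem_Ioc, Set.mem_Ici, Set.mem_Icc]
      constructor
      · rintro ⟨⟨_, h2⟩, h3⟩; exact ⟨h3, h2⟩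
      · rintro ⟨h1, h2⟩; exact ⟨⟨lt_of_lt_of_le hs.1 h1, h2⟩, h1⟩
    have hsub : IntervalIntegrable φ volume 0 s :=
      hφ.mono_set (Set.uIcc_subset_uIcc Set.left_mem_uIcc
        (by rw [Set.uIcc_of_le hT]; exact ⟨hs.1.le, hs.2⟩))
    rw [hset, integral_Icc_eq_integral_Ioc, ← intervalIntegral.integral_of_le hs.2,
      ← intervalIntegral.integral_interval_sub_left hφ hsub]
  have hmul : IntegrableOn (fun s => φ s * ∫ t in (0:ℝ)..s, φ t) (Set.Ioc 0 T) :=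
    (intervalIntegrable_iff_integrableOn_Ioc_of_le hT).mp (hφ.mul_continuousOn hYc)
  have step : (∫ u in Set.Ioc (0:ℝ) T, φ u * (∫ s in (0:ℝ)..u, φ s))
      = (∫ s in (0:ℝ)..T, φ s) * (∫ s in (0:ℝ)..T, φ s)
        - ∫ u in Set.Ioc (0:ℝ) T, φ u * (∫ s in (0:ℝ)..u, φ s) := by
    calc (∫ u in Set.Ioc (0:ℝ) T, φ u * (∫ s in (0:ℝ)..u, φ s))
        = ∫ u in Set.Ioc (0:ℝ) T, φ u * (∫ s in Set.Ioc (0:ℝ) T ∩ Set.Iic u, φ s) := by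
          refine setIntegral_congr_fun measurableSet_Ioc fun u hu => ?_
          rw [key u hu]
      _ = ∫ s in Set.Ioc (0:ℝ) T, φ s * (∫ u in Set.Ioc (0:ℝ) T ∩ Set.Ici s, φ u) :=
          swap_aux hφ' hφ'
      _ = ∫ s in Set.Ioc (0:ℝ) T,
            (φ s * (∫ u in (0:ℝ)..T, φ u) - φ s * (∫ u in (0:ℝ)..s, φ u)) := by
          refine setIntegral_congr_fun measurableSet_Ioc fun s hs => ?_
          rw [key2 s hs, mul_sub]
      _ = (∫ s in Set.Ioc (0:ℝ) T, φ s * (∫ u in (0:ℝ)..T, φ u))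
            - ∫ s in Set.Ioc (0:ℝ) T, φ s * (∫ u in (0:ℝ)..s, φ u) :=
          integral_sub (hφ'.mul_const _) hmul
      _ = (∫ s in (0:ℝ)..T, φ s) * (∫ s in (0:ℝ)..T, φ s)
            - ∫ u in Set.Ioc (0:ℝ) T, φ u * (∫ s in (0:ℝ)..u, φ s) := by
          rw [integral_mul_const, ← intervalIntegral.integral_of_le hT]
  rw [intervalIntegral.integral_of_le hT]
  linarith [step]

private lemma lemA {T : ℝ} (hT : 0 ≤ T) {φ g g' : ℝ → ℝ}
    (hφ : IntervalIntegrable φ volume 0 T)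
    (hg : ∀ u ∈ Set.Icc (0:ℝ) T, HasDerivAt g (g' u) u)
    (hg' : ContinuousOn g' (Set.Icc (0:ℝ) T)) :
    (∫ u in (0:ℝ)..T, g u * φ u)
      = g T * (∫ s in (0:ℝ)..T, φ s) - ∫ u in (0:ℝ)..T, g' u * (∫ s in (0:ℝ)..u, φ s) := by
  have huIcc : Set.uIcc (0:ℝ) T = Set.Icc 0 T := Set.uIcc_of_le hT
  have hg'i : IntervalIntegrable g' volume 0 T :=
    (huIcc ▸ hg' : ContinuousOn g' (Set.uIcc (0:ℝ) T)).intervalIntegrable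
  have hφ' : IntegrableOn φ (Set.Ioc 0 T) :=
    (intervalIntegrable_iff_integrableOn_Ioc_of_le hT).mp hφ
  have hg'' : IntegrableOn g' (Set.Ioc 0 T) :=
    (intervalIntegrable_iff_integrableOn_Ioc_of_le hT).mp hg'i
  have hsubint : ∀ u ∈ Set.Icc (0:ℝ) T, IntervalIntegrable g' volume u T := by
    intro u hu
    exact hg'i.mono_set (Set.uIcc_subset_uIcc (by rw [huIcc]; exact hu) Set.right_mem_uIcc)
  have hFTC : ∀ u ∈ Set.Icc (0:ℝ) T, g u = g T - ∫ s in u..T, g' s := by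
    intro u hu
    have h1 : (∫ s in u..T, g' s) = g T - g u := by
      refine intervalIntegral.integral_eq_sub_of_hasDerivAt (fun x hx => hg x ?_) (hsubint u hu)
      have : Set.uIcc u T ⊆ Set.Icc (0:ℝ) T := by
        rw [← huIcc]
        exact Set.uIcc_subset_uIcc (by rw [huIcc]; exact hu) Set.right_mem_uIcc
      exact this hx
    linarith
  have keyW : ∀ u ∈ Set.Ioc (0:ℝ) T,
      (∫ x in Set.Ioc (0:ℝ) T ∩ Set.Ici u, g' x) = ∫ s in u..T, g' s := by
    intro u hu
    have hset : Set.Ioc (0:ℝ) T ∩ Set.Ici u = Set.Icc u T := by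
      ext x
      simp only [Set.mem_inter_iff, Set.mem_Ioc, Set.mem_Ici, Set.mem_Icc]
      constructor
      · rintro ⟨⟨_, h2⟩, h3⟩; exact ⟨h3, h2⟩
      · rintro ⟨h1, h2⟩; exact ⟨⟨lt_of_lt_of_le hu.1 h1, h2⟩, h1⟩
    rw [hset, integral_Icc_eq_integral_Ioc, ← intervalIntegral.integral_of_le hu.2]
  have key : ∀ u ∈ Set.Ioc (0:ℝ) T,
      (∫ s in Set.Ioc (0:ℝ) T ∩ Set.Iic u, φ s) = ∫ s in (0:ℝ)..u, φ s := by
    intro u hu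
    rw [Set.Ioc_inter_Iic, inf_eq_right.mpr hu.2, intervalIntegral.integral_of_le hu.1.le]
  -- continuity of W u = ∫ u..T g'
  have hWc : ContinuousOn (fun u => ∫ s in u..T, g' s) (Set.uIcc (0:ℝ) T) := by
    have h1 : ContinuousOn (fun u => ∫ s in (0:ℝ)..u, g' s) (Set.uIcc (0:ℝ) T) :=
      intervalIntegral.continuousOn_primitive_interval' hg'i Set.left_mem_uIcc
    have h2 : ∀ u ∈ Set.uIcc (0:ℝ) T,
        (∫ s in u..T, g' s) = (∫ s in (0:ℝ)..T, g' s) - ∫ s in (0:ℝ)..u, g' s := by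
      intro u hu
      rw [intervalIntegral.integral_interval_sub_left hg'i
        (hg'i.mono_set (Set.uIcc_subset_uIcc Set.left_mem_uIcc hu))]
    exact (continuousOn_const.sub h1).congr h2
  have hWφ : IntegrableOn (fun u => (∫ s in u..T, g' s) * φ u) (Set.Ioc 0 T) :=
    (intervalIntegrable_iff_integrableOn_Ioc_of_le hT).mp (hφ.continuousOn_mul hWc)
  calc (∫ u in (0:ℝ)..T, g u * φ u)
      = ∫ u in Set.Ioc (0:ℝ) T, g u * φ u := intervalIntegral.integral_of_le hT
    _ = ∫ u in Set.Ioc (0:ℝ) T,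
          (g T * φ u - (∫ s in u..T, g' s) * φ u) := by
        refine setIntegral_congr_fun measurableSet_Ioc fun u hu => ?_
        rw [hFTC u ⟨hu.1.le, hu.2⟩, sub_mul]
    _ = (∫ u in Set.Ioc (0:ℝ) T, g T * φ u)
          - ∫ u in Set.Ioc (0:ℝ) T, (∫ s in u..T, g' s) * φ u :=
        integral_sub (hφ'.const_mul _) hWφ
    _ = g T * (∫ s in (0:ℝ)..T, φ s)
          - ∫ u in (0:ℝ)..T, g' u * (∫ s in (0:ℝ)..u, φ s) := by
        rw [integral_const_mul, ← intervalIntegral.integral_of_le hT]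
        congr 1
        calc (∫ u in Set.Ioc (0:ℝ) T, (∫ s in u..T, g' s) * φ u)
            = ∫ u in Set.Ioc (0:ℝ) T, φ u * (∫ x in Set.Ioc (0:ℝ) T ∩ Set.Ici u, g' x) := by
              refine setIntegral_congr_fun measurableSet_Ioc fun u hu => ?_
              rw [keyW u hu, mul_comm]
          _ = ∫ u in Set.Ioc (0:ℝ) T, g' u * (∫ s in Set.Ioc (0:ℝ) T ∩ Set.Iic u, φ s) :=
              (swap_aux hg'' hφ').symm
          _ = ∫ u in Set.Ioc (0:ℝ) T, g' u * (∫ s in (0:ℝ)..u, φ s) := by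
              refine setIntegral_congr_fun measurableSet_Ioc fun u hu => ?_
              rw [key u hu]
          _ = ∫ u in (0:ℝ)..T, g' u * (∫ s in (0:ℝ)..u, φ s) :=
              (intervalIntegral.integral_of_le hT).symm

private lemma lemE {T : ℝ} (hT : 0 ≤ T) {φ : ℝ → ℝ}
    (hφ : IntervalIntegrable φ volume 0 T) :
    (∫ u in (0:ℝ)..T, (φ u * (1/(2*(1+u)) * (1 + ∫ s in (0:ℝ)..u, φ s))
        - (1/(2*(1+u)) * (1 + ∫ s in (0:ℝ)..u, φ s))^2))
      = (1 + ∫ s in (0:ℝ)..T, φ s)^2 / (4*(1+T)) - 1/4 := by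
  have huIcc : Set.uIcc (0:ℝ) T = Set.Icc 0 T := Set.uIcc_of_le hT
  have hposu : ∀ u ∈ Set.uIcc (0:ℝ) T, (0:ℝ) < 1 + u := by
    intro u hu; rw [huIcc] at hu; linarith [hu.1]
  have hYc : ContinuousOn (fun t => ∫ s in (0:ℝ)..t, φ s) (Set.uIcc (0:ℝ) T) :=
    intervalIntegral.continuousOn_primitive_interval' hφ Set.left_mem_uIcc
  have hwcu : ContinuousOn (fun u : ℝ => 1/(2*(1+u))) (Set.uIcc (0:ℝ) T) := by
    refine continuousOn_const.div (by fun_prop) fun u hu => ?_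
    have := hposu u hu; positivity
  have hvcu : ContinuousOn (fun u : ℝ => 1/(2*(1+u)^2)) (Set.uIcc (0:ℝ) T) := by
    refine continuousOn_const.div (by fun_prop) fun u hu => ?_
    have := hposu u hu; positivity
  have hwd : ∀ u ∈ Set.Icc (0:ℝ) T, HasDerivAt (fun x : ℝ => 1/(2*(1+x)))
      (-(1/(2*(1+u)^2))) u := by
    intro u hu
    have h1u : (0:ℝ) < 1 + u := by linarith [hu.1]
    have hne : (2:ℝ)*(1+u) ≠ 0 := by positivity
    have hlin : HasDerivAt (fun x : ℝ => 2*(1+x)) 2 u := by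
      simpa using ((hasDerivAt_id u).const_add (1:ℝ)).const_mul (2:ℝ)
    have h2 := hlin.fun_inv hne
    have heq : (fun x : ℝ => 1/(2*(1+x))) = fun x : ℝ => ((2:ℝ)*(1+x))⁻¹ := by
      funext x; rw [one_div]
    rw [heq]
    exact h2.congr_deriv (by field_simp)
  have i2 : IntervalIntegrable (fun u => (∫ s in (0:ℝ)..u, φ s) * φ u) volume 0 T :=
    hφ.continuousOn_mul hYc
  -- P1
  have P1 := lemA (g := fun u : ℝ => 1/(2*(1+u))) (g' := fun u : ℝ => -(1/(2*(1+u)^2)))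
    hT hφ hwd (by rw [← huIcc]; exact hvcu.neg)
  simp only [neg_mul, intervalIntegral.integral_neg, sub_neg_eq_add] at P1
  -- P2
  have P2 := lemA (g := fun u : ℝ => 1/(2*(1+u))) (g' := fun u : ℝ => -(1/(2*(1+u)^2)))
    hT i2 hwd (by rw [← huIcc]; exact hvcu.neg)
  simp only [neg_mul, intervalIntegral.integral_neg, sub_neg_eq_add] at P2
  have hprim : ∀ u ∈ Set.uIcc (0:ℝ) T,
      (∫ s in (0:ℝ)..u, (∫ t in (0:ℝ)..s, φ t) * φ s) = (∫ s in (0:ℝ)..u, φ s)^2/2 := by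
    intro u hu
    have hu' := hu; rw [huIcc] at hu'
    have h1 : IntervalIntegrable φ volume 0 u :=
      hφ.mono_set (Set.uIcc_subset_uIcc Set.left_mem_uIcc hu)
    calc (∫ s in (0:ℝ)..u, (∫ t in (0:ℝ)..s, φ t) * φ s)
        = ∫ s in (0:ℝ)..u, φ s * (∫ t in (0:ℝ)..s, φ t) :=
          intervalIntegral.integral_congr fun s _ => mul_comm _ _
      _ = (∫ s in (0:ℝ)..u, φ s)^2/2 := lemC hu'.1 h1
  have P2' : (∫ u in (0:ℝ)..T, 1/(2*(1+u)) * ((∫ s in (0:ℝ)..u, φ s) * φ u))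
      = 1/(2*(1+T)) * ((∫ s in (0:ℝ)..T, φ s)^2/2)
        + ∫ u in (0:ℝ)..T, 1/(2*(1+u)^2) * ((∫ s in (0:ℝ)..u, φ s)^2/2) := by
    rw [P2, hprim T Set.right_mem_uIcc]
    congr 1
    exact intervalIntegral.integral_congr fun u hu => by rw [hprim u hu]
  -- P3
  have P3 : (∫ u in (0:ℝ)..T, 1/(2*(1+u)^2)) = 1/2 - 1/(2*(1+T)) := by
    have hFTC := intervalIntegral.integral_eq_sub_of_hasDerivAt
      (f := fun u : ℝ => -(1/(2*(1+u)))) (f' := fun u : ℝ => 1/(2*(1+u)^2))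
      (fun u hu => by simpa using (hwd u (huIcc ▸ hu)).fun_neg)
      (hvcu.intervalIntegrable)
    rw [hFTC]
    norm_num
    ring
  -- pointwise expansion
  have hEq : Set.EqOn
      (fun u => (φ u * (1/(2*(1+u)) * (1 + ∫ s in (0:ℝ)..u, φ s))
        - (1/(2*(1+u)) * (1 + ∫ s in (0:ℝ)..u, φ s))^2))
      (fun u => (1/(2*(1+u)) * φ u + 1/(2*(1+u)) * ((∫ s in (0:ℝ)..u, φ s) * φ u))
        - (1/(2*(1+u)^2)/2 + 1/(2*(1+u)^2) * (∫ s in (0:ℝ)..u, φ s)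
          + 1/(2*(1+u)^2) * ((∫ s in (0:ℝ)..u, φ s)^2/2)))
      (Set.uIcc (0:ℝ) T) := by
    intro u hu
    simp only
    have h1u : (0:ℝ) < 1 + u := hposu u hu
    have h2 : (1/(2*(1+u)):ℝ)^2 = (1/(2*(1+u)^2))/2 := by
      rw [div_pow, one_pow, div_div]; congr 1; ring
    linear_combination (-(1 + ∫ s in (0:ℝ)..u, φ s)^2) * h2
  rw [intervalIntegral.integral_congr hEq]
  -- integrability of pieces
  have iA : IntervalIntegrable (fun u => 1/(2*(1+u)) * φ u) volume 0 T :=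
    hφ.continuousOn_mul hwcu
  have iB : IntervalIntegrable (fun u => 1/(2*(1+u)) * ((∫ s in (0:ℝ)..u, φ s) * φ u))
      volume 0 T := i2.continuousOn_mul hwcu
  have iC1 : IntervalIntegrable (fun u : ℝ => 1/(2*(1+u)^2)/2) volume 0 T :=
    (hvcu.div_const 2).intervalIntegrable
  have iC2 : IntervalIntegrable (fun u => 1/(2*(1+u)^2) * (∫ s in (0:ℝ)..u, φ s)) volume 0 T :=
    (hvcu.mul hYc).intervalIntegrable
  have iC3 : IntervalIntegrable
      (fun u => 1/(2*(1+u)^2) * ((∫ s in (0:ℝ)..u, φ s)^2/2)) volume 0 T :=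
    (hvcu.mul ((hYc.pow 2).div_const 2)).intervalIntegrable
  rw [intervalIntegral.integral_sub (iA.add iB) ((iC1.add iC2).add iC3),
    intervalIntegral.integral_add iA iB,
    intervalIntegral.integral_add (iC1.add iC2) iC3,
    intervalIntegral.integral_add iC1 iC2,
    intervalIntegral.integral_div]
  rw [P1, P2', P3]
  have h1T : (0:ℝ) < 1 + T := by linarith
  field_simp
  ring

/-- For any piecewise-C¹ (absolutely continuous with integrable
derivative) curve `y : [0,Δu] → ℝ` with `y 0 = 1`, `y Δu = √(1+Δu)`, the
functional `∫₀^{Δu} (ẏ² − y²/(4(1+u)²))` is nonnegative, and it vanishes for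
`y₀(u) = √(1+u)` (so the infimum of the functional over such curves is 0). -/
theorem stmt_0 (Δu : ℝ) (hΔu : 0 < Δu)
    (y y' : ℝ → ℝ)
    (hy : ∀ t ∈ Set.Icc (0:ℝ) Δu, y t = y 0 + ∫ s in (0:ℝ)..t, y' s)
    (hy'int : IntervalIntegrable y' volume 0 Δu)
    (hy'sq : IntervalIntegrable (fun s => (y' s)^2) volume 0 Δu)
    (h0 : y 0 = 1) (h1 : y Δu = Real.sqrt (1 + Δu)) :
    (0 ≤ ∫ u in (0:ℝ)..Δu, ((y' u)^2 - (y u)^2 / (4 * (1 + u)^2))) ∧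
    (∫ u in (0:ℝ)..Δu,
        ((1 / (2 * Real.sqrt (1 + u)))^2
          - (Real.sqrt (1 + u))^2 / (4 * (1 + u)^2)) = 0) := by
  have hT : (0:ℝ) ≤ Δu := hΔu.le
  have huIcc : Set.uIcc (0:ℝ) Δu = Set.Icc 0 Δu := Set.uIcc_of_le hT
  constructor
  · have hposu : ∀ u ∈ Set.uIcc (0:ℝ) Δu, (0:ℝ) < 1 + u := by
      intro u hu; rw [huIcc] at hu; linarith [hu.1]
    have hYc : ContinuousOn (fun t => ∫ s in (0:ℝ)..t, y' s) (Set.uIcc (0:ℝ) Δu) :=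
      intervalIntegral.continuousOn_primitive_interval' hy'int Set.left_mem_uIcc
    have hyY : ∀ u ∈ Set.uIcc (0:ℝ) Δu, y u = 1 + ∫ s in (0:ℝ)..u, y' s := by
      intro u hu; rw [huIcc] at hu; rw [hy u hu, h0]
    have hyc : ContinuousOn y (Set.uIcc (0:ℝ) Δu) :=
      (continuousOn_const.add hYc).congr hyY
    have hwcu : ContinuousOn (fun u : ℝ => 1/(2*(1+u))) (Set.uIcc (0:ℝ) Δu) := by
      refine continuousOn_const.div (by fun_prop) fun u hu => ?_
      have := hposu u hu; positivity
    have hwyc : ContinuousOn (fun u => 1/(2*(1+u)) * y u) (Set.uIcc (0:ℝ) Δu) := hwcu.mul hyc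
    have hE0 := lemE hT hy'int
    have hcongr : (∫ u in (0:ℝ)..Δu, (y' u * (1/(2*(1+u)) * (1 + ∫ s in (0:ℝ)..u, y' s))
          - (1/(2*(1+u)) * (1 + ∫ s in (0:ℝ)..u, y' s))^2))
        = ∫ u in (0:ℝ)..Δu, (y' u * (1/(2*(1+u)) * y u) - (1/(2*(1+u)) * y u)^2) :=
      intervalIntegral.integral_congr fun u hu => by rw [hyY u hu]
    have hEval : (1 + ∫ s in (0:ℝ)..Δu, y' s) = Real.sqrt (1 + Δu) := by
      rw [← hyY Δu Set.right_mem_uIcc, h1]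
    have h1T : (0:ℝ) < 1 + Δu := by linarith
    have hE : (∫ u in (0:ℝ)..Δu,
        (y' u * (1/(2*(1+u)) * y u) - (1/(2*(1+u)) * y u)^2)) = 0 := by
      rw [← hcongr, hE0, hEval, Real.sq_sqrt (by linarith : (0:ℝ) ≤ 1 + Δu)]
      field_simp
      ring
    have hptw : Set.EqOn (fun u => (y' u)^2 - (y u)^2 / (4 * (1 + u)^2))
        (fun u => (y' u - 1/(2*(1+u)) * y u)^2
          + 2*(y' u * (1/(2*(1+u)) * y u) - (1/(2*(1+u)) * y u)^2))
        (Set.uIcc (0:ℝ) Δu) := by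
      intro u hu
      simp only
      have h2 : (1/(2*(1+u)):ℝ)^2 = 1/(4*(1+u)^2) := by
        rw [div_pow, one_pow]; congr 1; ring
      linear_combination (y u)^2 * h2
    rw [intervalIntegral.integral_congr hptw]
    have icross : IntervalIntegrable
        (fun u => y' u * (1/(2*(1+u)) * y u) - (1/(2*(1+u)) * y u)^2) volume 0 Δu :=
      (hy'int.mul_continuousOn hwyc).sub (hwyc.pow 2).intervalIntegrable
    have isq : IntervalIntegrable (fun u => (y' u - 1/(2*(1+u)) * y u)^2) volume 0 Δu := by
      have heq : (fun u => (y' u - 1/(2*(1+u)) * y u)^2)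
          = fun u => (y' u)^2 - 2*(y' u * (1/(2*(1+u)) * y u)) + (1/(2*(1+u)) * y u)^2 := by
        funext u; ring
      rw [heq]
      exact (hy'sq.sub ((hy'int.mul_continuousOn hwyc).const_mul 2)).add
        (hwyc.pow 2).intervalIntegrable
    rw [intervalIntegral.integral_add isq (icross.const_mul 2),
      intervalIntegral.integral_const_mul, hE]
    have hnn := intervalIntegral.integral_nonneg (μ := volume) hT
      (fun u _ => sq_nonneg (y' u - 1/(2*(1+u)) * y u))
    linarith
  · have hzero : Set.EqOn
        (fun u => (1 / (2 * Real.sqrt (1 + u)))^2 - (Real.sqrt (1 + u))^2 / (4 * (1 + u)^2))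
        (fun _ => (0:ℝ)) (Set.uIcc (0:ℝ) Δu) := by
      intro u hu
      rw [huIcc] at hu
      have h1u : (0:ℝ) < 1 + u := by linarith [hu.1]
      have hs : Real.sqrt (1+u)^2 = 1+u := Real.sq_sqrt h1u.le
      have hsne : Real.sqrt (1+u) ≠ 0 := by
        exact (Real.sqrt_pos.mpr h1u).ne'
      simp only
      rw [div_pow, one_pow, mul_pow, hs]
      field_simp
      ring
    rw [intervalIntegral.integral_congr hzero]
    simp
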